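/- Let L be a finite lattice, S a pure interval of L with least element having extent-intent pair (A_S,B_S) and greatest element (C_S,D_S) in a θ-irreducible context K = (G,M,I). Then the map φ sending a concept (A,B) to (C_S,B_S) if (A,B) ∈ S, to (A, B ∪ B_S) if (A,B) ∈ S↓, to (A ∪ C_S, B) if (A,B) ∈ S↑, and to (A,B) if (A,B) ∈ S∥, is a surjective order-preserving map from B(K) onto B(G,M,I_S), where I_S = I ∪ (C_S × B_S). -/

import Mathlib

open Classical

variable {L : Type*}

/-- The interval relation `θ_S` for the single interval `S = [u,v]`. -/
def irel [Preorder L] (u v : L) (x y : L) : Prop :=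
  x = y ∨ (x ∈ Set.Icc u v ∧ y ∈ Set.Icc u v)

/-- `θ_S` as a setoid. -/
def irelSetoid [Preorder L] (u v : L) : Setoid L where
  r := irel u v
  iseqv := by
    constructor
    · intro x; exact Or.inl rfl
    · rintro x y (rfl | ⟨hx, hy⟩)
      · exact Or.inl rfl
      · exact Or.inr ⟨hy, hx⟩
    · rintro x y z (rfl | ⟨hx, hy⟩) h
      · exact h
      · rcases h with rfl | ⟨hy', hz⟩
        · exact Or.inr ⟨hx, hy⟩
        · exact Or.inr ⟨hx, hz⟩

/-- `x_θ`, the least element of the class of `x`. -/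
noncomputable def ilow [Preorder L] (u v : L) (x : L) : L :=
  if x ∈ Set.Icc u v then u else x

/-- `x^θ`, the greatest element of the class of `x`. -/
noncomputable def ihigh [Preorder L] (u v : L) (x : L) : L :=
  if x ∈ Set.Icc u v then v else x

/-- `S↓`, the elements outside `S` strictly below some element of `S`. -/
def iSdown [Preorder L] (u v : L) : Set L :=
  {z | z ∉ Set.Icc u v ∧ ∃ s ∈ Set.Icc u v, z < s}

/-- `S↑`, the elements outside `S` strictly above some element of `S`. -/
def iSupSet [Preorder L] (u v : L) : Set L :=
  {z | z ∉ Set.Icc u v ∧ ∃ s ∈ Set.Icc u v, s < z}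

/-- `S∥`, the elements outside `S` incomparable to all of `S`. -/
def iSpar [Preorder L] (u v : L) : Set L :=
  {z | z ∉ Set.Icc u v ∧ ∀ s ∈ Set.Icc u v, ¬ s < z ∧ ¬ z < s}

/-- The relation `≤_θ` on representatives. -/
def ile [Preorder L] (u v : L) (x y : L) : Prop :=
  ilow u v x ≤ ihigh u v y ∨ (x ∈ iSdown u v ∧ y ∈ iSupSet u v)

/-- The induced relation `≤_θ` on the factor set `L/θ`. -/
def iLeQ [Preorder L] (u v : L) (a b : Quotient (irelSetoid u v)) : Prop :=
  ∃ x y : L, a = Quotient.mk (irelSetoid u v) x ∧ b = Quotient.mk (irelSetoid u v) y ∧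
    ile u v x y

/-- `S` is a nested interval. -/
def iNested [Lattice L] (u v : L) : Prop :=
  ∃ x y a w : L, x ∈ iSpar u v ∧ y ∈ iSpar u v ∧ a ∈ iSupSet u v ∧ w ∈ iSdown u v ∧
    y = x ⊔ w ∧ x = y ⊓ a ∧ ¬ y ≤ a ∧ ¬ w ≤ x

/-- `c` is `θ`-`⋁`-irreducible for the interval relation collapsing `S`: it is `⋁`-irreducible,
or it lies outside `S` and has at most one lower neighbour outside `S`. -/
def ThetaSupIrred {L : Type*} [Lattice L] (cbot ctop : L) (c : L) : Prop :=
  SupIrred c ∨ (c ∉ Set.Icc cbot ctop ∧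
    {d : L | d ∉ Set.Icc cbot ctop ∧ d ⋖ c}.Subsingleton)

/-- `c` is `θ`-`⋀`-irreducible for the interval relation collapsing `S`. -/
def ThetaInfIrred {L : Type*} [Lattice L] (cbot ctop : L) (c : L) : Prop :=
  InfIrred c ∨ (c ∉ Set.Icc cbot ctop ∧
    {d : L | d ∉ Set.Icc cbot ctop ∧ c ⋖ d}.Subsingleton)

section Stmt18Aux

open Set

/-! ### Classification of the regions relative to a subinterval -/

lemma mem_iSdown_iff' {L : Type*} [PartialOrder L] {u v z : L} (huv : u ≤ v) :
    z ∈ iSdown u v ↔ ¬ u ≤ z ∧ z ≤ v := by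
  constructor
  · rintro ⟨hz, s, hs, hzs⟩
    exact ⟨fun h => hz ⟨h, (hzs.le.trans hs.2)⟩, hzs.le.trans hs.2⟩
  · rintro ⟨h1, h2⟩
    refine ⟨fun h => h1 h.1, v, ⟨huv, le_rfl⟩, lt_of_le_of_ne h2 ?_⟩
    rintro rfl; exact h1 huv

lemma mem_iSupSet_iff' {L : Type*} [PartialOrder L] {u v z : L} (huv : u ≤ v) :
    z ∈ iSupSet u v ↔ u ≤ z ∧ ¬ z ≤ v := by
  constructor
  · rintro ⟨hz, s, hs, hzs⟩
    exact ⟨hs.1.trans hzs.le, fun h => hz ⟨hs.1.trans hzs.le, h⟩⟩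
  · rintro ⟨h1, h2⟩
    refine ⟨fun h => h2 h.2, u, ⟨le_rfl, huv⟩, lt_of_le_of_ne h1 ?_⟩
    rintro rfl; exact h2 huv

lemma mem_iSpar_iff' {L : Type*} [PartialOrder L] {u v z : L} (huv : u ≤ v) :
    z ∈ iSpar u v ↔ ¬ u ≤ z ∧ ¬ z ≤ v := by
  constructor
  · rintro ⟨hz, hall⟩
    constructor
    · intro h
      rcases eq_or_lt_of_le h with rfl | hlt
      · exact hz ⟨le_rfl, huv⟩
      · exact (hall u ⟨le_rfl, huv⟩).1 hlt
    · intro h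
      rcases eq_or_lt_of_le h with rfl | hlt
      · exact hz ⟨huv, le_rfl⟩
      · exact (hall v ⟨huv, le_rfl⟩).2 hlt
  · rintro ⟨h1, h2⟩
    refine ⟨fun h => h1 h.1, fun s hs => ⟨fun h => h1 (hs.1.trans h.le), fun h => h2 (h.le.trans hs.2)⟩⟩

/-! ### Basic concept lattice helpers -/

variable {G M : Type*}

lemma mem_extentClosure_iff {r : G → M → Prop} {N : Set M} {g : G} :
    g ∈ lowerPolar r N ↔ ∀ m ∈ N, r g m := Iff.rfl

lemma mem_intentClosure_iff {r : G → M → Prop} {E : Set G} {m : M} :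
    m ∈ upperPolar r E ↔ ∀ g ∈ E, r g m := Iff.rfl

lemma Concept.rel {r : G → M → Prop} {c : Concept G M r} {g : G} {m : M}
    (hg : g ∈ c.extent) (hm : m ∈ c.intent) : r g m := by
  rw [← c.upperPolar_extent] at hm; exact hm hg

lemma Concept.mem_snd_iff {r : G → M → Prop} {c : Concept G M r} {m : M} :
    m ∈ c.intent ↔ ∀ g ∈ c.extent, r g m := by
  conv_lhs => rw [← c.upperPolar_extent]
  exact Iff.rfl

lemma Concept.mem_fst_iff {r : G → M → Prop} {c : Concept G M r} {g : G} :
    g ∈ c.extent ↔ ∀ m ∈ c.intent, r g m := by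
  conv_lhs => rw [← c.lowerPolar_intent]
  exact Iff.rfl

lemma Concept.le_iff_fst {r : G → M → Prop} {c d : Concept G M r} :
    c ≤ d ↔ c.extent ⊆ d.extent := Iff.rfl

lemma Concept.le_iff_snd {r : G → M → Prop} {c d : Concept G M r} :
    c ≤ d ↔ d.intent ⊆ c.intent := Concept.intent_subset_intent_iff.symm

/-- The concept generated by a set of attributes. -/
def ofIntent (r : G → M → Prop) (N : Set M) : Concept G M r :=
  ⟨lowerPolar r N, upperPolar r (lowerPolar r N), rfl,
    lowerPolar_upperPolar_lowerPolar r N⟩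

/-- The concept generated by a set of objects. -/
def ofExtent (r : G → M → Prop) (E : Set G) : Concept G M r :=
  ⟨lowerPolar r (upperPolar r E), upperPolar r E,
    upperPolar_lowerPolar_upperPolar r E, rfl⟩

@[simp] lemma ofIntent_fst (r : G → M → Prop) (N : Set M) :
    (ofIntent r N).extent = lowerPolar r N := rfl

@[simp] lemma ofExtent_snd (r : G → M → Prop) (E : Set G) :
    (ofExtent r E).intent = upperPolar r E := rfl

lemma subset_ofIntent_snd (r : G → M → Prop) (N : Set M) :
    N ⊆ (ofIntent r N).intent := subset_upperPolar_lowerPolar r N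

lemma subset_ofExtent_fst (r : G → M → Prop) (E : Set G) :
    E ⊆ (ofExtent r E).extent := subset_lowerPolar_upperPolar r E

instance Concept.finite [Finite G] {r : G → M → Prop} : Finite (Concept G M r) :=
  Finite.of_injective (fun c => c.extent) Concept.extent_injective

end Stmt18Aux
section Stmt18Key

open Set

variable {G M : Type*} [Finite G] [Finite M] {I : G → M → Prop} {cbot ctop : Concept G M I}

omit [Finite G] [Finite M] in
lemma mem_extentClosure_singleton {r : G → M → Prop} {m : M} {g : G} :
    g ∈ lowerPolar r {m} ↔ r g m := by
  constructor
  · intro h; exact h rfl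
  · intro h m' hm'
    rw [Set.mem_singleton_iff] at hm'; subst hm'; exact h

omit [Finite G] [Finite M] in
lemma mem_intentClosure_singleton {r : G → M → Prop} {m : M} {g : G} :
    m ∈ upperPolar r {g} ↔ r g m := by
  constructor
  · intro h; exact h rfl
  · intro h g' hg'
    rw [Set.mem_singleton_iff] at hg'; subst hg'; exact h

/-- Key lemma for `S↓` (and half of `S∥`): in a `θ`-attribute-representable pure context,
for `c` with `¬ cbot ≤ c` and `c ≤ ctop`, the `I_S`-extent candidate collapses into `c.extent`. -/
lemma keyA (hle : cbot ≤ ctop) (hpure : ¬ iNested cbot ctop)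
    (hatt : ∀ c : Concept G M I, ThetaInfIrred cbot ctop c →
      ∃ m : M, c.extent = lowerPolar I {m})
    {c : Concept G M I} (hnb : ¬ cbot ≤ c) (hct : c ≤ ctop) :
    ctop.extent ∩ lowerPolar I (c.intent \ cbot.intent) ⊆ c.extent := by
  obtain ⟨m₀, hm₀c, hm₀b⟩ : ∃ m, m ∈ c.intent ∧ m ∉ cbot.intent := by
    by_contra h; push_neg at h; exact hnb (Concept.le_iff_snd.2 h)
  set q := ctop ⊓ ofIntent I (c.intent \ cbot.intent) with hqdef
  have hqfst : q.extent = ctop.extent ∩ lowerPolar I (c.intent \ cbot.intent) := rfl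
  suffices h : q ≤ c by intro g hg; exact Concept.le_iff_fst.1 h (hqfst ▸ hg)
  by_contra hqc0
  have hqcl : ∀ ⦃g⦄, g ∈ q.extent → g ∈ lowerPolar I (c.intent \ cbot.intent) := by
    intro g hg
    exact (show g ∈ ctop.extent ∩ lowerPolar I (c.intent \ cbot.intent) from hqfst ▸ hg).2
  have hBq : c.intent \ cbot.intent ⊆ q.intent := by
    intro m hm; rw [Concept.mem_snd_iff]; intro g hg
    exact hqcl hg hm
  have hnbq : ¬ cbot ≤ q := fun h => hm₀b (Concept.le_iff_snd.1 h (hBq ⟨hm₀c, hm₀b⟩))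
  have hqdown : q ∈ iSdown cbot ctop := (mem_iSdown_iff' hle).2 ⟨hnbq, inf_le_left⟩
  set T : Set (Concept G M I) := {t | c ≤ t ∧ ¬ q ≤ t ∧ ¬ cbot ≤ t} with hTdef
  obtain ⟨t, htT, hmax⟩ := Set.Finite.exists_maximalFor id T T.toFinite ⟨c, le_rfl, hqc0, hnb⟩
  obtain ⟨hctt, hqt, hbt⟩ := htT
  by_cases hirr : ThetaInfIrred cbot ctop t
  · obtain ⟨m, hm⟩ := hatt t hirr
    have hmt : m ∈ t.intent := by
      rw [← t.upperPolar_extent, hm]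
      exact subset_upperPolar_lowerPolar I {m} rfl
    have hmc : m ∈ c.intent := Concept.le_iff_snd.1 hctt hmt
    by_cases hmb : m ∈ cbot.intent
    · refine hbt ?_
      rw [Concept.le_iff_fst, hm]
      intro g hg
      exact mem_extentClosure_singleton.2 (Concept.rel hg hmb)
    · refine hqt ?_
      rw [Concept.le_iff_fst, hm]
      intro g hg
      exact mem_extentClosure_singleton.2 (hqcl hg ⟨hmc, hmb⟩)
  · have htIcc : t ∉ Set.Icc cbot ctop := fun h => hbt h.1
    have hnsub : ¬ ({d : Concept G M I | d ∉ Set.Icc cbot ctop ∧ t ⋖ d}.Subsingleton) :=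
      fun hs => hirr (Or.inr ⟨htIcc, hs⟩)
    rw [Set.not_subsingleton_iff] at hnsub
    obtain ⟨d₁, ⟨hd₁I, hcov₁⟩, d₂, ⟨hd₂I, hcov₂⟩, hne⟩ := hnsub
    have dich : ∀ d : Concept G M I, d ∉ Set.Icc cbot ctop → t ⋖ d → q ≤ d ∨ cbot ≤ d := by
      intro d hdI hcov
      by_contra hcon
      push_neg at hcon
      have hdT : d ∈ T := ⟨hctt.trans hcov.le, hcon.1, hcon.2⟩
      exact hcov.lt.not_ge (hmax hdT hcov.le)
    have hmeet : d₁ ⊓ d₂ = t := by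
      rcases hcov₁.eq_or_eq (le_inf hcov₁.le hcov₂.le) inf_le_left with h | h
      · exact h
      · exfalso
        have h12 : d₁ ≤ d₂ := by rw [← h]; exact inf_le_right
        rcases hcov₂.eq_or_eq hcov₁.le h12 with h' | h'
        · exact hcov₁.lt.ne' h'
        · exact hne h'
    have core : ∀ e₁ e₂ : Concept G M I, e₁ ∉ Set.Icc cbot ctop → t ⋖ e₁ → cbot ≤ e₁ →
        t ⋖ e₂ → q ≤ e₂ → ¬ cbot ≤ e₂ → e₁ ⊓ e₂ = t → False := by
      intro e₁ e₂ hI₁ hc₁ hb₁ hc₂ hq₂ hnb₂ hm12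
      have hntc : ¬ t ≤ ctop := by
        intro h
        rcases hc₁.eq_or_eq (le_inf hc₁.le h) inf_le_left with he | he
        · refine hbt ?_
          have h2 : t ⊔ cbot ≤ e₁ ⊓ ctop := le_inf (sup_le hc₁.le hb₁) (sup_le h hle)
          rw [he] at h2
          exact le_sup_right.trans h2
        · exact hI₁ ⟨hb₁, by rw [← he]; exact inf_le_right⟩
      have hd₂eq : t ⊔ q = e₂ := by
        rcases hc₂.eq_or_eq le_sup_left (sup_le hc₂.le hq₂) with he | he
        · exact absurd (by rw [← he]; exact le_sup_right : q ≤ t) hqt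
        · exact he
      have htpar : t ∈ iSpar cbot ctop := (mem_iSpar_iff' hle).2 ⟨hbt, hntc⟩
      have hd₂par : e₂ ∈ iSpar cbot ctop :=
        (mem_iSpar_iff' hle).2 ⟨hnb₂, fun h => hntc (hc₂.le.trans h)⟩
      have hd₁up : e₁ ∈ iSupSet cbot ctop :=
        (mem_iSupSet_iff' hle).2 ⟨hb₁, fun h => hI₁ ⟨hb₁, h⟩⟩
      have hn1 : ¬ e₂ ≤ e₁ := by
        intro h
        have he2t : e₂ ≤ t := by rw [← hm12]; exact le_inf h le_rfl
        exact hc₂.lt.not_ge he2t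
      exact hpure ⟨t, e₂, e₁, q, htpar, hd₂par, hd₁up, hqdown, hd₂eq.symm,
        (by rw [← hm12]; exact inf_comm e₁ e₂), hn1, hqt⟩
    rcases dich d₁ hd₁I hcov₁ with h1 | h1 <;> rcases dich d₂ hd₂I hcov₂ with h2 | h2
    · exact hqt (by rw [← hmeet]; exact le_inf h1 h2)
    · by_cases hb1 : cbot ≤ d₁
      · exact hbt (by rw [← hmeet]; exact le_inf hb1 h2)
      · exact core d₂ d₁ hd₂I hcov₂ h2 hcov₁ h1 hb1 (by rw [inf_comm]; exact hmeet)
    · by_cases hb2 : cbot ≤ d₂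
      · exact hbt (by rw [← hmeet]; exact le_inf h1 hb2)
      · exact core d₁ d₂ hd₁I hcov₁ h1 hcov₂ h2 hb2 hmeet
    · exact hbt (by rw [← hmeet]; exact le_inf h1 h2)

/-- Dual key lemma for `S↑` (and half of `S∥`). -/
lemma keyA' (hle : cbot ≤ ctop) (hpure : ¬ iNested cbot ctop)
    (hobj : ∀ c : Concept G M I, ThetaSupIrred cbot ctop c →
      ∃ g : G, c.intent = upperPolar I {g})
    {c : Concept G M I} (hnt : ¬ c ≤ ctop) (hbc : cbot ≤ c) :
    cbot.intent ∩ upperPolar I (c.extent \ ctop.extent) ⊆ c.intent := by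
  obtain ⟨g₀, hg₀c, hg₀t⟩ : ∃ g, g ∈ c.extent ∧ g ∉ ctop.extent := by
    by_contra h; push_neg at h; exact hnt (Concept.le_iff_fst.2 h)
  set p := cbot ⊔ ofExtent I (c.extent \ ctop.extent) with hpdef
  have hpsnd : p.intent = cbot.intent ∩ upperPolar I (c.extent \ ctop.extent) := rfl
  suffices h : c ≤ p by intro m hm; exact Concept.le_iff_snd.1 h (hpsnd ▸ hm)
  by_contra hcp0
  have hpcl : ∀ ⦃m⦄, m ∈ p.intent → m ∈ upperPolar I (c.extent \ ctop.extent) := by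
    intro m hm
    exact (show m ∈ cbot.intent ∩ upperPolar I (c.extent \ ctop.extent) from hpsnd ▸ hm).2
  have hAp : c.extent \ ctop.extent ⊆ p.extent := by
    intro g hg; rw [Concept.mem_fst_iff]; intro m hm
    exact hpcl hm hg
  have hnpt : ¬ p ≤ ctop := fun h => hg₀t (Concept.le_iff_fst.1 h (hAp ⟨hg₀c, hg₀t⟩))
  have hpup : p ∈ iSupSet cbot ctop := (mem_iSupSet_iff' hle).2 ⟨le_sup_left, hnpt⟩
  set T : Set (Concept G M I) := {t | t ≤ c ∧ ¬ t ≤ p ∧ ¬ t ≤ ctop} with hTdef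
  obtain ⟨t, htT, hmin⟩ := Set.Finite.exists_minimalFor id T T.toFinite ⟨c, le_rfl, hcp0, hnt⟩
  obtain ⟨hctt, hpt, hbt⟩ := htT
  by_cases hirr : ThetaSupIrred cbot ctop t
  · obtain ⟨g, hg⟩ := hobj t hirr
    have hgt : g ∈ t.extent := by
      rw [← t.lowerPolar_intent, hg]
      exact subset_lowerPolar_upperPolar I {g} rfl
    have hgc : g ∈ c.extent := Concept.le_iff_fst.1 hctt hgt
    by_cases hgC : g ∈ ctop.extent
    · refine hbt ?_
      rw [Concept.le_iff_snd, hg]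
      intro m hm
      exact mem_intentClosure_singleton.2 (Concept.rel hgC hm)
    · refine hpt ?_
      rw [Concept.le_iff_snd, hg]
      intro m hm
      exact mem_intentClosure_singleton.2 (hpcl hm ⟨hgc, hgC⟩)
  · have htIcc : t ∉ Set.Icc cbot ctop := fun h => hbt h.2
    have hnsub : ¬ ({d : Concept G M I | d ∉ Set.Icc cbot ctop ∧ d ⋖ t}.Subsingleton) :=
      fun hs => hirr (Or.inr ⟨htIcc, hs⟩)
    rw [Set.not_subsingleton_iff] at hnsub
    obtain ⟨d₁, ⟨hd₁I, hcov₁⟩, d₂, ⟨hd₂I, hcov₂⟩, hne⟩ := hnsub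
    have dich : ∀ d : Concept G M I, d ∉ Set.Icc cbot ctop → d ⋖ t → d ≤ p ∨ d ≤ ctop := by
      intro d hdI hcov
      by_contra hcon
      push_neg at hcon
      have hdT : d ∈ T := ⟨(hcov.le).trans hctt, hcon.1, hcon.2⟩
      exact hcov.lt.not_ge (hmin hdT hcov.le)
    have hjoin : d₁ ⊔ d₂ = t := by
      rcases hcov₁.eq_or_eq le_sup_left (sup_le hcov₁.le hcov₂.le) with h | h
      · exfalso
        have h12 : d₂ ≤ d₁ := by rw [← h]; exact le_sup_right
        rcases hcov₂.eq_or_eq h12 hcov₁.le with h' | h'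
        · exact hne h'
        · exact hcov₁.lt.ne h'
      · exact h
    have core : ∀ e₁ e₂ : Concept G M I, e₁ ∉ Set.Icc cbot ctop → e₁ ⋖ t → e₁ ≤ ctop →
        e₂ ⋖ t → e₂ ≤ p → ¬ e₂ ≤ ctop → e₁ ⊔ e₂ = t → False := by
      intro e₁ e₂ hI₁ hc₁ hb₁ hc₂ hq₂ hnb₂ hm12
      have hntc : ¬ cbot ≤ t := by
        intro h
        rcases hc₁.eq_or_eq (le_inf hc₁.le hb₁) inf_le_left with he | he
        · exact hI₁ ⟨by rw [← he]; exact le_inf h hle, hb₁⟩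
        · exact hbt (by rw [← he]; exact inf_le_right)
      have hd₂eq : t ⊓ p = e₂ := by
        rcases hc₂.eq_or_eq (le_inf hc₂.le hq₂) inf_le_left with he | he
        · exact he
        · exact absurd (by rw [← he]; exact inf_le_right : t ≤ p) hpt
      have htpar : t ∈ iSpar cbot ctop := (mem_iSpar_iff' hle).2 ⟨hntc, hbt⟩
      have hd₂par : e₂ ∈ iSpar cbot ctop :=
        (mem_iSpar_iff' hle).2 ⟨fun h => hntc (h.trans hc₂.le), hnb₂⟩
      have hd₁dn : e₁ ∈ iSdown cbot ctop :=
        (mem_iSdown_iff' hle).2 ⟨fun h => hI₁ ⟨h, hb₁⟩, hb₁⟩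
      have hn1 : ¬ e₁ ≤ e₂ := by
        intro h
        have he1t : t ≤ e₂ := by rw [← hm12]; exact sup_le h le_rfl
        exact hc₂.lt.not_ge he1t
      exact hpure ⟨e₂, t, p, e₁, hd₂par, htpar, hpup, hd₁dn,
        (by rw [← hm12]; exact sup_comm e₁ e₂), hd₂eq.symm, hpt, hn1⟩
    rcases dich d₁ hd₁I hcov₁ with h1 | h1 <;> rcases dich d₂ hd₂I hcov₂ with h2 | h2
    · exact hpt (by rw [← hjoin]; exact sup_le h1 h2)
    · by_cases hb1 : d₁ ≤ ctop
      · exact hbt (by rw [← hjoin]; exact sup_le hb1 h2)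
      · exact core d₂ d₁ hd₂I hcov₂ h2 hcov₁ h1 hb1 (by rw [sup_comm]; exact hjoin)
    · by_cases hb2 : d₂ ≤ ctop
      · exact hbt (by rw [← hjoin]; exact sup_le h1 hb2)
      · exact core d₁ d₂ hd₁I hcov₁ h1 hcov₂ h2 hb2 hjoin
    · exact hbt (by rw [← hjoin]; exact sup_le h1 h2)

end Stmt18Key
section Stmt18KeyB

open Set

variable {G M : Type*} {I : G → M → Prop} {cbot ctop : Concept G M I}

/-- Key lemma for the extent side of `S∥`, using purity only. -/
lemma keyB (hle : cbot ≤ ctop) (hpure : ¬ iNested cbot ctop)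
    {c : Concept G M I} (hnb : ¬ cbot ≤ c) (hnt : ¬ c ≤ ctop) :
    ctop.extent ∩ lowerPolar I (c.intent \ cbot.intent) ⊆ c.extent := by
  obtain ⟨m₀, hm₀c, hm₀b⟩ : ∃ m, m ∈ c.intent ∧ m ∉ cbot.intent := by
    by_contra h; push_neg at h; exact hnb (Concept.le_iff_snd.2 h)
  set q := ctop ⊓ ofIntent I (c.intent \ cbot.intent) with hqdef
  have hqfst : q.extent = ctop.extent ∩ lowerPolar I (c.intent \ cbot.intent) := rfl
  suffices h : q ≤ c by intro g hg; exact Concept.le_iff_fst.1 h (hqfst ▸ hg)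
  by_contra hqc
  have hqcl : ∀ ⦃g⦄, g ∈ q.extent → g ∈ lowerPolar I (c.intent \ cbot.intent) := by
    intro g hg
    exact (show g ∈ ctop.extent ∩ lowerPolar I (c.intent \ cbot.intent) from hqfst ▸ hg).2
  have hBq : c.intent \ cbot.intent ⊆ q.intent := by
    intro m hm; rw [Concept.mem_snd_iff]; intro g hg
    exact hqcl hg hm
  have hnbq : ¬ cbot ≤ q := fun h => hm₀b (Concept.le_iff_snd.1 h (hBq ⟨hm₀c, hm₀b⟩))
  have hqdown : q ∈ iSdown cbot ctop := (mem_iSdown_iff' hle).2 ⟨hnbq, inf_le_left⟩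
  set y := c ⊔ q with hydef
  have hcy : c ≤ y := le_sup_left
  have hnby : ¬ cbot ≤ y := by
    intro h
    exact hm₀b (Concept.le_iff_snd.1 h (show m₀ ∈ c.intent ∩ q.intent from ⟨hm₀c, hBq ⟨hm₀c, hm₀b⟩⟩))
  have hnyt : ¬ y ≤ ctop := fun h => hnt (hcy.trans h)
  have hypar : y ∈ iSpar cbot ctop := (mem_iSpar_iff' hle).2 ⟨hnby, hnyt⟩
  have hcpar : c ∈ iSpar cbot ctop := (mem_iSpar_iff' hle).2 ⟨hnb, hnt⟩
  set r := ofIntent I (c.intent ∩ cbot.intent) with hrdef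
  have hcr : c ≤ r := by
    rw [Concept.le_iff_fst]
    intro g hg
    exact mem_extentClosure_iff.2 fun m hm => Concept.rel hg hm.1
  have hbr : cbot ≤ r := by
    rw [Concept.le_iff_fst]
    intro g hg
    exact mem_extentClosure_iff.2 fun m hm => Concept.rel hg hm.2
  have hmeet : y ⊓ r = c := by
    apply Concept.ext
    apply subset_antisymm
    · intro g hg
      have hg' : g ∈ y.extent ∩ r.extent := hg
      rw [Concept.mem_fst_iff]
      intro m hm
      by_cases hmb : m ∈ cbot.intent
      · exact (hg'.2 : g ∈ lowerPolar I (c.intent ∩ cbot.intent)) ⟨hm, hmb⟩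
      · exact Concept.rel hg'.1 (show m ∈ c.intent ∩ q.intent from ⟨hm, hBq ⟨hm, hmb⟩⟩)
    · intro g hg
      exact ⟨Concept.le_iff_fst.1 hcy hg, Concept.le_iff_fst.1 hcr hg⟩
  have hnrt : ¬ r ≤ ctop := fun h => hnt (hcr.trans h)
  have hrup : r ∈ iSupSet cbot ctop := (mem_iSupSet_iff' hle).2 ⟨hbr, hnrt⟩
  have hnyr : ¬ y ≤ r := by
    intro h
    have hyc : y ≤ c := by rw [← hmeet]; exact le_inf le_rfl h
    exact hqc (le_sup_right.trans hyc)
  exact hpure ⟨c, y, r, q, hcpar, hypar, hrup, hqdown, hydef, hmeet.symm, hnyr, hqc⟩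

/-- Key lemma for the intent side of `S∥`, using purity only. -/
lemma keyB' (hle : cbot ≤ ctop) (hpure : ¬ iNested cbot ctop)
    {c : Concept G M I} (hnb : ¬ cbot ≤ c) (hnt : ¬ c ≤ ctop) :
    cbot.intent ∩ upperPolar I (c.extent \ ctop.extent) ⊆ c.intent := by
  obtain ⟨g₀, hg₀c, hg₀t⟩ : ∃ g, g ∈ c.extent ∧ g ∉ ctop.extent := by
    by_contra h; push_neg at h; exact hnt (Concept.le_iff_fst.2 h)
  set p := cbot ⊔ ofExtent I (c.extent \ ctop.extent) with hpdef
  have hpsnd : p.intent = cbot.intent ∩ upperPolar I (c.extent \ ctop.extent) := rfl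
  suffices h : c ≤ p by intro m hm; exact Concept.le_iff_snd.1 h (hpsnd ▸ hm)
  by_contra hcp
  have hpcl : ∀ ⦃m⦄, m ∈ p.intent → m ∈ upperPolar I (c.extent \ ctop.extent) := by
    intro m hm
    exact (show m ∈ cbot.intent ∩ upperPolar I (c.extent \ ctop.extent) from hpsnd ▸ hm).2
  have hAp : c.extent \ ctop.extent ⊆ p.extent := by
    intro g hg; rw [Concept.mem_fst_iff]; intro m hm
    exact hpcl hm hg
  have hnpt : ¬ p ≤ ctop := fun h => hg₀t (Concept.le_iff_fst.1 h (hAp ⟨hg₀c, hg₀t⟩))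
  have hpup : p ∈ iSupSet cbot ctop := (mem_iSupSet_iff' hle).2 ⟨le_sup_left, hnpt⟩
  set x := c ⊓ p with hxdef
  have hxc : x ≤ c := inf_le_left
  have hnbx : ¬ cbot ≤ x := fun h => hnb (h.trans hxc)
  have hnxt : ¬ x ≤ ctop := fun h =>
    hg₀t (Concept.le_iff_fst.1 h (show g₀ ∈ c.extent ∩ p.extent from ⟨hg₀c, hAp ⟨hg₀c, hg₀t⟩⟩))
  have hxpar : x ∈ iSpar cbot ctop := (mem_iSpar_iff' hle).2 ⟨hnbx, hnxt⟩
  have hcpar : c ∈ iSpar cbot ctop := (mem_iSpar_iff' hle).2 ⟨hnb, hnt⟩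
  set w := ofExtent I (c.extent ∩ ctop.extent) with hwdef
  have hwc : w ≤ c := by
    rw [Concept.le_iff_snd]
    intro m hm
    exact mem_intentClosure_iff.2 fun g hg => Concept.rel hg.1 hm
  have hwt : w ≤ ctop := by
    rw [Concept.le_iff_fst]
    intro g hg
    rw [← ctop.lowerPolar_intent]
    exact mem_extentClosure_iff.2 fun m hm =>
      (hg : g ∈ lowerPolar I (upperPolar I (c.extent ∩ ctop.extent)))
        (mem_intentClosure_iff.2 fun g' hg' => Concept.rel hg'.2 hm)
  have hnbw : ¬ cbot ≤ w := fun h => hnb (h.trans hwc)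
  have hwdown : w ∈ iSdown cbot ctop := (mem_iSdown_iff' hle).2 ⟨hnbw, hwt⟩
  have hjoin : x ⊔ w = c := by
    apply Concept.ext'
    apply subset_antisymm
    · intro m hm
      have hm' : m ∈ x.intent ∩ w.intent := hm
      rw [Concept.mem_snd_iff]
      intro g hg
      by_cases hgt : g ∈ ctop.extent
      · exact (hm'.2 : m ∈ upperPolar I (c.extent ∩ ctop.extent)) ⟨hg, hgt⟩
      · exact (hm'.1 : m ∈ upperPolar I (c.extent ∩ p.extent)) ⟨hg, hAp ⟨hg, hgt⟩⟩
    · intro m hm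
      exact ⟨Concept.le_iff_snd.1 hxc hm, Concept.le_iff_snd.1 hwc hm⟩
  have hnwx : ¬ w ≤ x := by
    intro h
    have hcx : c ≤ x := by rw [← hjoin]; exact sup_le le_rfl h
    exact hcp (hcx.trans inf_le_right)
  exact hpure ⟨x, c, p, w, hxpar, hcpar, hpup, hwdown, hjoin.symm, hxdef, hcp, hnwx⟩

end Stmt18KeyB
section Stmt18Cl

open Set

variable {G M : Type*} {I : G → M → Prop} {cbot ctop : Concept G M I} {IS : G → M → Prop}

lemma clS1 (hle : cbot ≤ ctop)
    (hIS : ∀ g m, IS g m ↔ (I g m ∨ (g ∈ ctop.extent ∧ m ∈ cbot.intent))) :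
    upperPolar IS ctop.extent = cbot.intent := by
  apply subset_antisymm
  · intro m hm
    by_cases hmb : m ∈ cbot.intent
    · exact hmb
    · have hmem : m ∈ upperPolar I ctop.extent := by
        refine mem_intentClosure_iff.2 fun g hg => ?_
        rcases (hIS g m).1 (hm hg) with h | h
        · exact h
        · exact absurd h.2 hmb
      rw [ctop.upperPolar_extent] at hmem
      exact Concept.le_iff_snd.1 hle hmem
  · intro m hm
    exact mem_intentClosure_iff.2 fun g hg => (hIS g m).2 (Or.inr ⟨hg, hm⟩)

lemma clS2 (hle : cbot ≤ ctop)
    (hIS : ∀ g m, IS g m ↔ (I g m ∨ (g ∈ ctop.extent ∧ m ∈ cbot.intent))) :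
    lowerPolar IS cbot.intent = ctop.extent := by
  apply subset_antisymm
  · intro g hg
    by_cases hgt : g ∈ ctop.extent
    · exact hgt
    · have hmem : g ∈ lowerPolar I cbot.intent := by
        refine mem_extentClosure_iff.2 fun m hm => ?_
        rcases (hIS g m).1 (hg hm) with h | h
        · exact h
        · exact absurd h.1 hgt
      rw [cbot.lowerPolar_intent] at hmem
      exact Concept.le_iff_fst.1 hle hmem
  · intro g hg
    exact mem_extentClosure_iff.2 fun m hm => (hIS g m).2 (Or.inr ⟨hg, hm⟩)

lemma clD1 (hIS : ∀ g m, IS g m ↔ (I g m ∨ (g ∈ ctop.extent ∧ m ∈ cbot.intent)))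
    {c : Concept G M I} (hct : c ≤ ctop) :
    upperPolar IS c.extent = c.intent ∪ cbot.intent := by
  apply subset_antisymm
  · intro m hm
    by_cases hmb : m ∈ cbot.intent
    · exact Or.inr hmb
    · refine Or.inl ?_
      rw [Concept.mem_snd_iff]
      intro g hg
      rcases (hIS g m).1 (hm hg) with h | h
      · exact h
      · exact absurd h.2 hmb
  · rintro m (hm | hm)
    · exact mem_intentClosure_iff.2 fun g hg => (hIS g m).2 (Or.inl (Concept.rel hg hm))
    · exact mem_intentClosure_iff.2 fun g hg =>
        (hIS g m).2 (Or.inr ⟨Concept.le_iff_fst.1 hct hg, hm⟩)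

lemma clD2 (hIS : ∀ g m, IS g m ↔ (I g m ∨ (g ∈ ctop.extent ∧ m ∈ cbot.intent)))
    {c : Concept G M I} (hct : c ≤ ctop)
    (hkey : ctop.extent ∩ lowerPolar I (c.intent \ cbot.intent) ⊆ c.extent) :
    lowerPolar IS (c.intent ∪ cbot.intent) = c.extent := by
  apply subset_antisymm
  · intro g hg
    by_cases hgt : g ∈ ctop.extent
    · refine hkey ⟨hgt, mem_extentClosure_iff.2 fun m hm => ?_⟩
      rcases (hIS g m).1 (hg (Or.inl hm.1)) with h | h
      · exact h
      · exact absurd h.2 hm.2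
    · rw [Concept.mem_fst_iff]
      intro m hm
      rcases (hIS g m).1 (hg (Or.inl hm)) with h | h
      · exact h
      · exact absurd h.1 hgt
  · intro g hg
    refine mem_extentClosure_iff.2 fun m hm => ?_
    rcases hm with hm | hm
    · exact (hIS g m).2 (Or.inl (Concept.rel hg hm))
    · exact (hIS g m).2 (Or.inr ⟨Concept.le_iff_fst.1 hct hg, hm⟩)

lemma clU1 (hIS : ∀ g m, IS g m ↔ (I g m ∨ (g ∈ ctop.extent ∧ m ∈ cbot.intent)))
    {c : Concept G M I} (hbc : cbot ≤ c)
    (hkey : cbot.intent ∩ upperPolar I (c.extent \ ctop.extent) ⊆ c.intent) :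
    upperPolar IS (c.extent ∪ ctop.extent) = c.intent := by
  apply subset_antisymm
  · intro m hm
    by_cases hmb : m ∈ cbot.intent
    · refine hkey ⟨hmb, mem_intentClosure_iff.2 fun g hg => ?_⟩
      rcases (hIS g m).1 (hm (Or.inl hg.1)) with h | h
      · exact h
      · exact absurd h.1 hg.2
    · rw [Concept.mem_snd_iff]
      intro g hg
      rcases (hIS g m).1 (hm (Or.inl hg)) with h | h
      · exact h
      · exact absurd h.2 hmb
  · intro m hm
    refine mem_intentClosure_iff.2 ?_
    rintro g (hg | hg)
    · exact (hIS g m).2 (Or.inl (Concept.rel hg hm))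
    · exact (hIS g m).2 (Or.inr ⟨hg, Concept.le_iff_snd.1 hbc hm⟩)

lemma clU2 (hIS : ∀ g m, IS g m ↔ (I g m ∨ (g ∈ ctop.extent ∧ m ∈ cbot.intent)))
    {c : Concept G M I} (hbc : cbot ≤ c) :
    lowerPolar IS c.intent = c.extent ∪ ctop.extent := by
  apply subset_antisymm
  · intro g hg
    by_cases hgt : g ∈ ctop.extent
    · exact Or.inr hgt
    · refine Or.inl ?_
      rw [Concept.mem_fst_iff]
      intro m hm
      rcases (hIS g m).1 (hg hm) with h | h
      · exact h
      · exact absurd h.1 hgt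
  · rintro g (hg | hg)
    · exact mem_extentClosure_iff.2 fun m hm => (hIS g m).2 (Or.inl (Concept.rel hg hm))
    · exact mem_extentClosure_iff.2 fun m hm =>
        (hIS g m).2 (Or.inr ⟨hg, Concept.le_iff_snd.1 hbc hm⟩)

lemma clP1 (hIS : ∀ g m, IS g m ↔ (I g m ∨ (g ∈ ctop.extent ∧ m ∈ cbot.intent)))
    {c : Concept G M I}
    (hkey : cbot.intent ∩ upperPolar I (c.extent \ ctop.extent) ⊆ c.intent) :
    upperPolar IS c.extent = c.intent := by
  apply subset_antisymm
  · intro m hm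
    by_cases hmb : m ∈ cbot.intent
    · refine hkey ⟨hmb, mem_intentClosure_iff.2 fun g hg => ?_⟩
      rcases (hIS g m).1 (hm hg.1) with h | h
      · exact h
      · exact absurd h.1 hg.2
    · rw [Concept.mem_snd_iff]
      intro g hg
      rcases (hIS g m).1 (hm hg) with h | h
      · exact h
      · exact absurd h.2 hmb
  · intro m hm
    exact mem_intentClosure_iff.2 fun g hg => (hIS g m).2 (Or.inl (Concept.rel hg hm))

lemma clP2 (hIS : ∀ g m, IS g m ↔ (I g m ∨ (g ∈ ctop.extent ∧ m ∈ cbot.intent)))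
    {c : Concept G M I}
    (hkey : ctop.extent ∩ lowerPolar I (c.intent \ cbot.intent) ⊆ c.extent) :
    lowerPolar IS c.intent = c.extent := by
  apply subset_antisymm
  · intro g hg
    by_cases hgt : g ∈ ctop.extent
    · refine hkey ⟨hgt, mem_extentClosure_iff.2 fun m hm => ?_⟩
      rcases (hIS g m).1 (hg hm.1) with h | h
      · exact h
      · exact absurd h.2 hm.2
    · rw [Concept.mem_fst_iff]
      intro m hm
      rcases (hIS g m).1 (hg hm) with h | h
      · exact h
      · exact absurd h.1 hgt
  · intro g hg
    exact mem_extentClosure_iff.2 fun m hm => (hIS g m).2 (Or.inl (Concept.rel hg hm))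

end Stmt18Cl

open scoped Classical in
/-- The factor map `φ` from `B(K)` to `B(G,M,I_S)`. -/
noncomputable def phiMap {G M : Type*} [Finite G] [Finite M] {I : G → M → Prop}
    (cbot ctop : Concept G M I) (hle : cbot ≤ ctop) (hpure : ¬ iNested cbot ctop)
    (hobj : ∀ c : Concept G M I, ThetaSupIrred cbot ctop c →
      ∃ g : G, c.intent = upperPolar I {g})
    (hatt : ∀ c : Concept G M I, ThetaInfIrred cbot ctop c →
      ∃ m : M, c.extent = lowerPolar I {m})
    (IS : G → M → Prop)
    (hIS : ∀ g m, IS g m ↔ (I g m ∨ (g ∈ ctop.extent ∧ m ∈ cbot.intent))) :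
    Concept G M I → Concept G M IS := fun c =>
  if h1 : cbot ≤ c ∧ c ≤ ctop then
    ⟨ctop.extent, cbot.intent, clS1 hle hIS, clS2 hle hIS⟩
  else if h2 : c ≤ ctop then
    ⟨c.extent, c.intent ∪ cbot.intent, clD1 hIS h2,
      clD2 hIS h2 (keyA hle hpure hatt (fun hb => h1 ⟨hb, h2⟩) h2)⟩
  else if h3 : cbot ≤ c then
    ⟨c.extent ∪ ctop.extent, c.intent, clU1 hIS h3 (keyA' hle hpure hobj h2 h3), clU2 hIS h3⟩
  else
    ⟨c.extent, c.intent, clP1 hIS (keyB' hle hpure h3 h2), clP2 hIS (keyB hle hpure h3 h2)⟩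
/-- Let `(G,M,I)` be a `θ`-irreducible context (every `θ`-`⋁`-irreducible
concept is an object concept and every `θ`-`⋀`-irreducible concept is an attribute concept)
and `S = [(A_S,B_S),(C_S,D_S)]` a pure interval of its concept lattice. Then the map sending
`(A,B)` to `(C_S,B_S)` on `S`, to `(A, B ∪ B_S)` on `S↓`, to `(A ∪ C_S, B)` on `S↑` and fixing
`S∥`, is a surjective order-preserving map onto the concept lattice of the enriched context
`(G, M, I_S)`. -/
theorem surjective_monotone_onto_enriched {G M : Type*} [Finite G] [Finite M]
    (I : G → M → Prop) (cbot ctop : Concept G M I) (hle : cbot ≤ ctop)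
    (hpure : ¬ iNested cbot ctop)
    (hobj : ∀ c : Concept G M I, ThetaSupIrred cbot ctop c →
      ∃ g : G, c.intent = upperPolar I {g})
    (hatt : ∀ c : Concept G M I, ThetaInfIrred cbot ctop c →
      ∃ m : M, c.extent = lowerPolar I {m})
    (IS : G → M → Prop)
    (hIS : ∀ g m, IS g m ↔ (I g m ∨ (g ∈ ctop.extent ∧ m ∈ cbot.intent))) :
    ∃ φ : Concept G M I → Concept G M IS,
      Function.Surjective φ ∧ Monotone φ ∧
      (∀ c : Concept G M I, c ∈ Set.Icc cbot ctop →
        (φ c).extent = ctop.extent ∧ (φ c).intent = cbot.intent) ∧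
      (∀ c : Concept G M I, c ∈ iSdown cbot ctop →
        (φ c).extent = c.extent ∧ (φ c).intent = c.intent ∪ cbot.intent) ∧
      (∀ c : Concept G M I, c ∈ iSupSet cbot ctop →
        (φ c).extent = c.extent ∪ ctop.extent ∧ (φ c).intent = c.intent) ∧
      (∀ c : Concept G M I, c ∈ iSpar cbot ctop →
        (φ c).extent = c.extent ∧ (φ c).intent = c.intent) := by

  classical
  set φ : Concept G M I → Concept G M IS := phiMap cbot ctop hle hpure hobj hatt IS hIS with hφdef
  have hfst : ∀ c : Concept G M I, (φ c).extent =
      (if cbot ≤ c ∧ c ≤ ctop then ctop.extent else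
        if c ≤ ctop then c.extent else if cbot ≤ c then c.extent ∪ ctop.extent else c.extent) := by
    intro c
    show (phiMap cbot ctop hle hpure hobj hatt IS hIS c).extent = _
    unfold phiMap
    split_ifs <;> rfl
  have hsnd : ∀ c : Concept G M I, (φ c).intent =
      (if cbot ≤ c ∧ c ≤ ctop then cbot.intent else
        if c ≤ ctop then c.intent ∪ cbot.intent else if cbot ≤ c then c.intent else c.intent) := by
    intro c
    show (phiMap cbot ctop hle hpure hobj hatt IS hIS c).intent = _
    unfold phiMap
    split_ifs <;> rfl
  have caseIcc : ∀ c : Concept G M I, c ∈ Set.Icc cbot ctop →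
      (φ c).extent = ctop.extent ∧ (φ c).intent = cbot.intent := by
    intro c hc
    rw [Set.mem_Icc] at hc
    rw [hfst c, hsnd c, if_pos hc, if_pos hc]
    exact ⟨rfl, rfl⟩
  have caseDown : ∀ c : Concept G M I, c ∈ iSdown cbot ctop →
      (φ c).extent = c.extent ∧ (φ c).intent = c.intent ∪ cbot.intent := by
    intro c hc
    obtain ⟨hnb, hct⟩ := (mem_iSdown_iff' hle).1 hc
    rw [hfst c, hsnd c, if_neg (fun h => hnb h.1), if_pos hct,
      if_neg (fun h => hnb h.1), if_pos hct]
    exact ⟨rfl, rfl⟩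
  have caseUp : ∀ c : Concept G M I, c ∈ iSupSet cbot ctop →
      (φ c).extent = c.extent ∪ ctop.extent ∧ (φ c).intent = c.intent := by
    intro c hc
    obtain ⟨hbc, hnt⟩ := (mem_iSupSet_iff' hle).1 hc
    rw [hfst c, hsnd c, if_neg (fun h => hnt h.2), if_neg hnt, if_pos hbc,
      if_neg (fun h => hnt h.2), if_neg hnt, if_pos hbc]
    exact ⟨rfl, rfl⟩
  have casePar : ∀ c : Concept G M I, c ∈ iSpar cbot ctop →
      (φ c).extent = c.extent ∧ (φ c).intent = c.intent := by
    intro c hc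
    obtain ⟨hnb, hnt⟩ := (mem_iSpar_iff' hle).1 hc
    rw [hfst c, hsnd c, if_neg (fun h => hnb h.1), if_neg hnt, if_neg hnb,
      if_neg (fun h => hnb h.1), if_neg hnt, if_neg hnb]
    exact ⟨rfl, rfl⟩
  have hmono : Monotone φ := by
    intro c d hcd
    have hsub : ∀ e : Concept G M I, e.extent ⊆
        (if cbot ≤ e ∧ e ≤ ctop then ctop.extent else
          if e ≤ ctop then e.extent else if cbot ≤ e then e.extent ∪ ctop.extent else e.extent) := by
      intro e
      split_ifs with ha hb hc'
      · exact Concept.le_iff_fst.1 ha.2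
      · exact subset_rfl
      · exact Set.subset_union_left
      · exact subset_rfl
    rw [Concept.le_iff_fst, hfst c, hfst d]
    by_cases h1 : cbot ≤ c ∧ c ≤ ctop
    · rw [if_pos h1]
      by_cases h2 : cbot ≤ d ∧ d ≤ ctop
      · rw [if_pos h2]
      · have hbd : cbot ≤ d := h1.1.trans hcd
        have hnd : ¬ d ≤ ctop := fun h => h2 ⟨hbd, h⟩
        rw [if_neg h2, if_neg hnd, if_pos hbd]
        exact Set.subset_union_right
    · rw [if_neg h1]
      by_cases hct : c ≤ ctop
      · rw [if_pos hct]
        exact (Concept.le_iff_fst.1 hcd).trans (hsub d)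
      · rw [if_neg hct]
        by_cases hb : cbot ≤ c
        · rw [if_pos hb]
          have hbd : cbot ≤ d := hb.trans hcd
          have hnd : ¬ d ≤ ctop := fun h => hct (hcd.trans h)
          rw [if_neg (fun h => hnd h.2), if_neg hnd, if_pos hbd]
          exact Set.union_subset_union_left _ (Concept.le_iff_fst.1 hcd)
        · rw [if_neg hb]
          exact (Concept.le_iff_fst.1 hcd).trans (hsub d)
  have hsurj : Function.Surjective φ := by
    intro e
    by_cases hA : e.extent ⊆ ctop.extent
    · by_cases hC : ctop.extent ⊆ e.extent
      · refine ⟨ctop, Concept.ext ?_⟩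
        rw [(caseIcc ctop (Set.mem_Icc.2 ⟨hle, le_rfl⟩)).1]
        exact subset_antisymm hC hA
      · have hBB' : e.intent \ cbot.intent ⊆ upperPolar I e.extent := by
          intro m hm
          refine mem_intentClosure_iff.2 fun g hg => ?_
          rcases (hIS g m).1 (Concept.rel hg hm.1) with h | h
          · exact h
          · exact absurd h.2 hm.2
        have hDS : ctop.intent ⊆ upperPolar I e.extent := by
          intro m hm
          exact mem_intentClosure_iff.2 fun g hg => Concept.rel (hA hg) hm
        have hclosed : lowerPolar I (upperPolar I e.extent) = e.extent := by
          apply subset_antisymm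
          · intro g hg
            have hgC : g ∈ ctop.extent := by
              rw [← ctop.lowerPolar_intent]
              exact mem_extentClosure_iff.2 fun m hm => hg (hDS hm)
            rw [← e.lowerPolar_intent]
            refine mem_extentClosure_iff.2 fun m hm => ?_
            by_cases hmb : m ∈ cbot.intent
            · exact (hIS g m).2 (Or.inr ⟨hgC, hmb⟩)
            · exact (hIS g m).2 (Or.inl (hg (hBB' ⟨hm, hmb⟩)))
          · exact subset_lowerPolar_upperPolar I e.extent
        set c : Concept G M I := ⟨e.extent, upperPolar I e.extent, rfl, hclosed⟩ with hcdef
        have hcct : c ≤ ctop := Concept.le_iff_fst.2 hA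
        have hnbc : ¬ cbot ≤ c := by
          intro h
          have hBsub : c.intent ⊆ cbot.intent := Concept.le_iff_snd.1 h
          refine hC ?_
          intro g hg
          rw [← e.lowerPolar_intent]
          refine mem_extentClosure_iff.2 fun m hm => ?_
          have hmb : m ∈ cbot.intent := by
            by_contra hmb'
            exact hmb' (hBsub (hBB' ⟨hm, hmb'⟩))
          exact (hIS g m).2 (Or.inr ⟨hg, hmb⟩)
        have hmem : c ∈ iSdown cbot ctop := (mem_iSdown_iff' hle).2 ⟨hnbc, hcct⟩
        refine ⟨c, Concept.ext ?_⟩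
        rw [(caseDown c hmem).1]
    · by_cases hC : ctop.extent ⊆ e.extent
      · have hAA' : e.extent \ ctop.extent ⊆ lowerPolar I e.intent := by
          intro g hg
          refine mem_extentClosure_iff.2 fun m hm => ?_
          rcases (hIS g m).1 (Concept.rel hg.1 hm) with h | h
          · exact h
          · exact absurd h.1 hg.2
        have hBBS : e.intent ⊆ cbot.intent := by
          intro m hm
          by_contra hmb
          have hmem : m ∈ upperPolar I ctop.extent := by
            refine mem_intentClosure_iff.2 fun g hg => ?_
            rcases (hIS g m).1 (Concept.rel (hC hg) hm) with h | h
            · exact h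
            · exact absurd h.2 hmb
          rw [ctop.upperPolar_extent] at hmem
          exact hmb (Concept.le_iff_snd.1 hle hmem)
        have hAS : cbot.extent ⊆ lowerPolar I e.intent := by
          intro g hg
          exact mem_extentClosure_iff.2 fun m hm => Concept.rel hg (hBBS hm)
        have hclosed : upperPolar I (lowerPolar I e.intent) = e.intent := by
          apply subset_antisymm
          · intro m hm
            have hmB : m ∈ cbot.intent := by
              rw [← cbot.upperPolar_extent]
              exact mem_intentClosure_iff.2 fun g hg => hm (hAS hg)
            rw [← e.upperPolar_extent]
            refine mem_intentClosure_iff.2 fun g hg => ?_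
            by_cases hgt : g ∈ ctop.extent
            · exact (hIS g m).2 (Or.inr ⟨hgt, hmB⟩)
            · exact (hIS g m).2 (Or.inl (hm (hAA' ⟨hg, hgt⟩)))
          · exact subset_upperPolar_lowerPolar I e.intent
        set c : Concept G M I := ⟨lowerPolar I e.intent, e.intent, hclosed, rfl⟩ with hcdef
        have hbc : cbot ≤ c := Concept.le_iff_snd.2 hBBS
        have hnct : ¬ c ≤ ctop := by
          intro h
          obtain ⟨g₀, hg₀⟩ : ∃ g, g ∈ e.extent ∧ g ∉ ctop.extent := by
            by_contra hh; push_neg at hh; exact hA hh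
          exact hg₀.2 (Concept.le_iff_fst.1 h (hAA' ⟨hg₀.1, hg₀.2⟩))
        have hmem : c ∈ iSupSet cbot ctop := (mem_iSupSet_iff' hle).2 ⟨hbc, hnct⟩
        refine ⟨c, Concept.ext' ?_⟩
        rw [(caseUp c hmem).2]
      · obtain ⟨g₀, hg₀c, hg₀t⟩ : ∃ g, g ∈ e.extent ∧ g ∉ ctop.extent := by
          by_contra hh; push_neg at hh; exact hA hh
        have hBnBS : ¬ e.intent ⊆ cbot.intent := by
          intro hsub'
          refine hC ?_
          intro g hg
          rw [← e.lowerPolar_intent]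
          exact mem_extentClosure_iff.2 fun m hm => (hIS g m).2 (Or.inr ⟨hg, hsub' hm⟩)
        obtain ⟨m₀, hm₀c, hm₀b⟩ : ∃ m, m ∈ e.intent ∧ m ∉ cbot.intent := by
          by_contra hh; push_neg at hh; exact hBnBS hh
        have hBB1 : e.intent \ cbot.intent ⊆ upperPolar I e.extent := by
          intro m hm
          refine mem_intentClosure_iff.2 fun g hg => ?_
          rcases (hIS g m).1 (Concept.rel hg hm.1) with h | h
          · exact h
          · exact absurd h.2 hm.2
        have hAA1 : e.extent \ ctop.extent ⊆ lowerPolar I e.intent := by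
          intro g hg
          refine mem_extentClosure_iff.2 fun m hm => ?_
          rcases (hIS g m).1 (Concept.rel hg.1 hm) with h | h
          · exact h
          · exact absurd h.1 hg.2
        set x : Concept G M I := ofIntent I e.intent with hxdef
        set y : Concept G M I := ofExtent I e.extent with hydef
        have hA1A : x.extent ⊆ e.extent := by
          intro g hg
          rw [← e.lowerPolar_intent]
          exact mem_extentClosure_iff.2 fun m hm => (hIS g m).2 (Or.inl (hg hm))
        have hB1B : y.intent ⊆ e.intent := by
          intro m hm
          rw [← e.upperPolar_extent]
          exact mem_intentClosure_iff.2 fun g hg => (hIS g m).2 (Or.inl (hm hg))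
        have hAY : e.extent ⊆ y.extent := subset_ofExtent_fst I e.extent
        have hBX : e.intent ⊆ x.intent := subset_ofIntent_snd I e.intent
        have hBdec : ∀ m ∈ e.intent, m ∈ y.intent ∨ (m ∈ x.intent ∧ m ∈ cbot.intent) := by
          intro m hm
          by_cases hmb : m ∈ cbot.intent
          · exact Or.inr ⟨hBX hm, hmb⟩
          · exact Or.inl (hBB1 ⟨hm, hmb⟩)
        have hAdec : ∀ g ∈ e.extent, g ∈ x.extent ∨ (g ∈ y.extent ∧ g ∈ ctop.extent) := by
          intro g hg
          by_cases hgt : g ∈ ctop.extent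
          · exact Or.inr ⟨hAY hg, hgt⟩
          · exact Or.inl (hAA1 ⟨hg, hgt⟩)
        by_cases hxy : x = y
        · have hfst_eq : x.extent = e.extent := by
            apply subset_antisymm hA1A
            intro g hg
            rcases hAdec g hg with h | h
            · exact h
            · rw [hxy]; exact h.1
          have hnbx : ¬ cbot ≤ x := fun h => hm₀b (Concept.le_iff_snd.1 h (hBX hm₀c))
          have hnxt : ¬ x ≤ ctop := by
            intro h
            have hgx : g₀ ∈ x.extent := by rw [hfst_eq]; exact hg₀c
            exact hg₀t (Concept.le_iff_fst.1 h hgx)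
          have hmem : x ∈ iSpar cbot ctop := (mem_iSpar_iff' hle).2 ⟨hnbx, hnxt⟩
          refine ⟨x, Concept.ext ?_⟩
          rw [(casePar x hmem).1, hfst_eq]
        · exfalso
          have hxyle : x ≤ y := Concept.le_iff_fst.2 (hA1A.trans hAY)
          set w := y ⊓ ctop with hwdef
          set a := x ⊔ cbot with hadef
          have hyeq : x ⊔ w = y := by
            apply Concept.ext'
            apply subset_antisymm
            · intro m hm
              have hm' : m ∈ x.intent ∩ w.intent := hm
              refine mem_intentClosure_iff.2 fun g hg => ?_
              rcases hAdec g hg with h | h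
              · exact (hm'.1 : m ∈ upperPolar I (lowerPolar I e.intent)) h
              · exact (hm'.2 : m ∈ upperPolar I (y.extent ∩ ctop.extent)) h
            · intro m hm
              exact ⟨Concept.le_iff_snd.1 hxyle hm,
                mem_intentClosure_iff.2 fun g hg => Concept.rel (c := y) hg.1 hm⟩
          have hxeq : y ⊓ a = x := by
            apply Concept.ext
            apply subset_antisymm
            · intro g hg
              have hg' : g ∈ y.extent ∩ a.extent := hg
              refine mem_extentClosure_iff.2 fun m hm => ?_
              rcases hBdec m hm with h | h
              · exact Concept.rel (c := y) hg'.1 h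
              · exact (hg'.2 : g ∈ lowerPolar I (x.intent ∩ cbot.intent)) h
            · intro g hg
              exact ⟨Concept.le_iff_fst.1 hxyle hg,
                mem_extentClosure_iff.2 fun m hm => Concept.rel (c := x) hg hm.1⟩
          have hnby : ¬ cbot ≤ y := by
            intro h
            refine hBnBS ?_
            intro m hm
            rcases hBdec m hm with h' | h'
            · exact Concept.le_iff_snd.1 h h'
            · exact h'.2
          have hnyt : ¬ y ≤ ctop := fun h => hg₀t (Concept.le_iff_fst.1 h (hAY hg₀c))
          have hypar : y ∈ iSpar cbot ctop := (mem_iSpar_iff' hle).2 ⟨hnby, hnyt⟩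
          have hnbx : ¬ cbot ≤ x := fun h => hm₀b (Concept.le_iff_snd.1 h (hBX hm₀c))
          have hnxt : ¬ x ≤ ctop := by
            intro h
            rcases hAdec g₀ hg₀c with h' | h'
            · exact hg₀t (Concept.le_iff_fst.1 h h')
            · exact hg₀t h'.2
          have hxpar : x ∈ iSpar cbot ctop := (mem_iSpar_iff' hle).2 ⟨hnbx, hnxt⟩
          have hwdown : w ∈ iSdown cbot ctop :=
            (mem_iSdown_iff' hle).2 ⟨fun h => hnby (h.trans inf_le_left), inf_le_right⟩
          have haup : a ∈ iSupSet cbot ctop :=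
            (mem_iSupSet_iff' hle).2 ⟨le_sup_right, fun h => hnxt (le_sup_left.trans h)⟩
          have hnya : ¬ y ≤ a := by
            intro h
            have hyx : y ≤ x := by rw [← hxeq]; exact le_inf le_rfl h
            exact hxy (le_antisymm hxyle hyx)
          have hnwx : ¬ w ≤ x := by
            intro h
            have hyx : y ≤ x := by rw [← hyeq]; exact sup_le le_rfl h
            exact hxy (le_antisymm hxyle hyx)
          exact hpure ⟨x, y, a, w, hxpar, hypar, haup, hwdown, hyeq.symm, hxeq.symm, hnya, hnwx⟩
  exact ⟨φ, hsurj, hmono, caseIcc, caseDown, caseUp, casePar⟩
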